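/- Let A = ⊕_{i=1}^r A_i and B = ⊕_{k=1}^s B_k be regular decompositions of F-algebras A and B with commutation matrices M^A = (θ_{i,j}) and M^B = (η_{k,l}). Then A ⊗_F B is regular with respect to the decomposition A ⊗ B = ⊕_{i=1}^r ⊕_{k=1}^s A_i ⊗ B_k, and its matrix of commutation relations is the Kronecker product M^A ⊗ M^B, i.e. ε^{A⊗B}_{(i,k),(j,l)} = θ_{i,j}·η_{k,l}. -/

import Mathlib

open scoped TensorProduct

/-- A regular decomposition of an algebra `A` indexed by `ι`: a direct sum decomposition into
subspaces such that (P1) every prescribed sequence of components admits a nonzero product, and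
(P2) homogeneous elements commute up to a nonzero scalar depending only on their components. -/
structure RegularDecomp (F : Type*) [Field F] (A : Type*) [Ring A] [Algebra F A]
    (ι : Type*) [DecidableEq ι] where
  comp : ι → Submodule F A
  isInternal : DirectSum.IsInternal comp
  eps : ι → ι → F
  eps_ne_zero : ∀ i j, eps i j ≠ 0
  comm : ∀ i j, ∀ x ∈ comp i, ∀ y ∈ comp j, x * y = eps i j • (y * x)
  prod_ne_zero : ∀ {n : ℕ} (idx : Fin n → ι),
    ∃ x : Fin n → A, (∀ k, x k ∈ comp (idx k)) ∧ (List.ofFn x).prod ≠ 0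

section Aux

variable {F : Type*} [Field F] {A B : Type*} [Ring A] [Algebra F A] [Ring B] [Algebra F B]

/-- Over a field, the tensor product of nonzero elements is nonzero. -/
lemma RegularDecompAux.tmul_ne_zero {a : A} {b : B} (ha : a ≠ 0) (hb : b ≠ 0) :
    a ⊗ₜ[F] b ≠ 0 := by
  obtain ⟨f, hf⟩ : ∃ f : Module.Dual F A, f a ≠ 0 := by
    by_contra h; push_neg at h
    exact ha ((Module.forall_dual_apply_eq_zero_iff F a).mp h)
  obtain ⟨g, hg⟩ : ∃ g : Module.Dual F B, g b ≠ 0 := by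
    by_contra h; push_neg at h
    exact hb ((Module.forall_dual_apply_eq_zero_iff F b).mp h)
  intro h
  have h2 : (TensorProduct.lid F F) (TensorProduct.map f g (a ⊗ₜ[F] b)) = f a * g b := by
    simp [smul_eq_mul]
  rw [h] at h2
  simp only [map_zero] at h2
  exact mul_ne_zero hf hg h2.symm

lemma RegularDecompAux.ofFn_prod_tmul :
    ∀ {n : ℕ} (x : Fin n → A) (y : Fin n → B),
    (List.ofFn fun k => x k ⊗ₜ[F] y k).prod = (List.ofFn x).prod ⊗ₜ[F] (List.ofFn y).prod := by
  intro n
  induction n with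
  | zero => intro x y; simp [Algebra.TensorProduct.one_def]
  | succ n ih =>
    intro x y
    rw [List.ofFn_succ, List.ofFn_succ (f := x), List.ofFn_succ (f := y),
      List.prod_cons, List.prod_cons, List.prod_cons,
      ih (fun k => x k.succ) (fun k => y k.succ), Algebra.TensorProduct.tmul_mul_tmul]

end Aux

/-- The tensor product of regular algebras is regular, with matrix of
commutation relations the Kronecker product of the two matrices. -/
theorem tensorProduct_regular
    {F : Type*} [Field F] {A B : Type*} [Ring A] [Algebra F A] [Ring B] [Algebra F B]
    {ι κ : Type*} [DecidableEq ι] [DecidableEq κ]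
    (D : RegularDecomp F A ι) (E : RegularDecomp F B κ) :
    ∃ T : RegularDecomp F (A ⊗[F] B) (ι × κ),
      (∀ i k, T.comp (i, k) =
        LinearMap.range (TensorProduct.map (D.comp i).subtype (E.comp k).subtype)) ∧
      ∀ i j k l, T.eps (i, k) (j, l) = D.eps i j * E.eps k l := by
  classical
  set S : ι × κ → Submodule F (A ⊗[F] B) := fun p =>
    LinearMap.range (TensorProduct.map (D.comp p.1).subtype (E.comp p.2).subtype) with hSdef
  have mem_S : ∀ (i : ι) (k : κ) (a : A) (b : B), a ∈ D.comp i → b ∈ E.comp k →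
      a ⊗ₜ[F] b ∈ S (i, k) := fun i k a b ha hb => ⟨⟨a, ha⟩ ⊗ₜ[F] ⟨b, hb⟩, rfl⟩
  have hspan : ∀ p : ι × κ, S p = Submodule.span F
      {t : A ⊗[F] B | ∃ a ∈ D.comp p.1, ∃ b ∈ E.comp p.2, a ⊗ₜ[F] b = t} := by
    intro p
    rw [hSdef]
    dsimp only
    rw [TensorProduct.range_map_eq_span_tmul]
    congr 1
    ext t
    constructor
    · rintro ⟨a, b, rfl⟩; exact ⟨a, a.2, b, b.2, rfl⟩
    · rintro ⟨a, ha, b, hb, rfl⟩; exact ⟨⟨a, ha⟩, ⟨b, hb⟩, rfl⟩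
  -- the decomposition equivalences of `A` and `B`
  set eA : A ≃ₗ[F] DirectSum ι fun i => ↥(D.comp i) :=
    (LinearEquiv.ofBijective (DirectSum.coeLinearMap D.comp) D.isInternal).symm with heAdef
  set eB : B ≃ₗ[F] DirectSum κ fun k => ↥(E.comp k) :=
    (LinearEquiv.ofBijective (DirectSum.coeLinearMap E.comp) E.isInternal).symm with heBdef
  have heA : ∀ (i : ι) (a : A) (ha : a ∈ D.comp i),
      eA a = DirectSum.lof F ι (fun i => ↥(D.comp i)) i ⟨a, ha⟩ := by
    intro i a ha
    rw [heAdef, LinearEquiv.symm_apply_eq]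
    exact (DirectSum.coeLinearMap_of D.comp i ⟨a, ha⟩).symm
  have heB : ∀ (k : κ) (b : B) (hb : b ∈ E.comp k),
      eB b = DirectSum.lof F κ (fun k => ↥(E.comp k)) k ⟨b, hb⟩ := by
    intro k b hb
    rw [heBdef, LinearEquiv.symm_apply_eq]
    exact (DirectSum.coeLinearMap_of E.comp k ⟨b, hb⟩).symm
  -- the comparison map
  set φ : ∀ p : ι × κ, (↥(D.comp p.1) ⊗[F] ↥(E.comp p.2)) →ₗ[F] ↥(S p) := fun p =>
    (TensorProduct.map (D.comp p.1).subtype (E.comp p.2).subtype).rangeRestrict with hφdef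
  set Φ : (A ⊗[F] B) →ₗ[F] DirectSum (ι × κ) fun p => ↥(S p) :=
    (DirectSum.toModule F (ι × κ) _
        (fun p => (DirectSum.lof F (ι × κ) (fun q => ↥(S q)) p).comp (φ p))).comp
      (((TensorProduct.directSum F F (fun i => ↥(D.comp i))
          (fun k => ↥(E.comp k))).toLinearMap).comp
        (TensorProduct.congr eA eB).toLinearMap) with hΦdef
  have key : ∀ (i : ι) (k : κ) (a : A) (b : B) (ha : a ∈ D.comp i) (hb : b ∈ E.comp k),
      Φ (a ⊗ₜ[F] b) =
        DirectSum.lof F (ι × κ) (fun q => ↥(S q)) (i, k) ⟨a ⊗ₜ[F] b, mem_S i k a b ha hb⟩ := by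
    intro i k a b ha hb
    rw [hΦdef]
    simp only [LinearMap.comp_apply, LinearEquiv.coe_coe, TensorProduct.congr_tmul,
      heA i a ha, heB k b hb, TensorProduct.directSum_lof_tmul_lof, DirectSum.toModule_lof,
      LinearMap.comp_apply]
    exact congrArg _ (Subtype.ext rfl)
  -- `coeLinearMap S ∘ Φ = id`
  have h1 : ∀ z : A ⊗[F] B, DirectSum.coeLinearMap S (Φ z) = z := by
    have step1 : ∀ (i : ι) (a : A), a ∈ D.comp i → ∀ b : B,
        a ⊗ₜ[F] b ∈ LinearMap.eqLocus ((DirectSum.coeLinearMap S).comp Φ) LinearMap.id := by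
      intro i a ha b
      have hb' : b ∈ (⊤ : Submodule F B) := trivial
      rw [← E.isInternal.submodule_iSup_eq_top] at hb'
      revert hb'
      have : E.isInternal.submodule_iSup_eq_top = E.isInternal.submodule_iSup_eq_top := rfl
      refine fun hb' => (iSup_le (fun k => ?_) :
        (⨆ k, E.comp k) ≤ Submodule.comap (TensorProduct.mk F A B a)
          (LinearMap.eqLocus ((DirectSum.coeLinearMap S).comp Φ) LinearMap.id)) hb'
      intro b hb
      simp only [Submodule.mem_comap, TensorProduct.mk_apply, LinearMap.mem_eqLocus,
        LinearMap.comp_apply, LinearMap.id_apply]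
      rw [key i k a b ha hb, DirectSum.lof_eq_of, DirectSum.coeLinearMap_of]
    have step2 : ∀ z : A ⊗[F] B,
        z ∈ LinearMap.eqLocus ((DirectSum.coeLinearMap S).comp Φ) LinearMap.id := by
      intro z
      have hz : z ∈ (⊤ : Submodule F (A ⊗[F] B)) := trivial
      rw [← TensorProduct.span_tmul_eq_top F A B] at hz
      refine Submodule.span_le.mpr ?_ hz
      rintro t ⟨a, b, rfl⟩
      have haT : a ∈ (⊤ : Submodule F A) := trivial
      rw [← D.isInternal.submodule_iSup_eq_top] at haT
      revert haT
      refine fun haT => (iSup_le (fun i => ?_) :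
        (⨆ i, D.comp i) ≤ Submodule.comap ((TensorProduct.mk F A B).flip b)
          (LinearMap.eqLocus ((DirectSum.coeLinearMap S).comp Φ) LinearMap.id)) haT
      intro a ha
      simpa using step1 i a ha b
    intro z
    exact step2 z
  -- `Φ` is surjective
  have hsurj : Function.Surjective Φ := by
    have hlof : ∀ (p : ι × κ) (x : ↥(S p)),
        DirectSum.lof F (ι × κ) (fun q => ↥(S q)) p x ∈ LinearMap.range Φ := by
      rintro ⟨i, k⟩ ⟨t, ht⟩
      have ht' := ht
      rw [hspan (i, k)] at ht'
      induction ht' using Submodule.span_induction with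
      | mem u hu =>
        obtain ⟨a, ha, b, hb, rfl⟩ := hu
        exact ⟨a ⊗ₜ[F] b, key i k a b ha hb⟩
      | zero => exact ⟨0, by rw [map_zero]; exact (map_zero _).symm⟩
      | add u v hu hv ihu ihv =>
        rw [← hspan (i, k)] at hu hv
        obtain ⟨zu, hzu⟩ := ihu hu
        obtain ⟨zv, hzv⟩ := ihv hv
        refine ⟨zu + zv, ?_⟩
        rw [map_add, hzu, hzv, ← map_add]
        exact congrArg _ (Subtype.ext rfl)
      | smul c u hu ihu =>
        rw [← hspan (i, k)] at hu
        obtain ⟨zu, hzu⟩ := ihu hu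
        refine ⟨c • zu, ?_⟩
        rw [map_smul, hzu, ← map_smul]
        exact congrArg _ (Subtype.ext rfl)
    intro w
    induction w using DirectSum.induction_on with
    | zero => exact ⟨0, map_zero _⟩
    | of p x =>
      have := hlof p x
      rw [← DirectSum.lof_eq_of F]
      exact this
    | add u v ihu ihv =>
      obtain ⟨zu, hzu⟩ := ihu
      obtain ⟨zv, hzv⟩ := ihv
      exact ⟨zu + zv, by rw [map_add, hzu, hzv]⟩
  have hΦbij : Function.Bijective Φ := by
    refine ⟨?_, hsurj⟩
    intro z z' hzz'
    have := congrArg (DirectSum.coeLinearMap S) hzz'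
    rwa [h1, h1] at this
  have hinternal : DirectSum.IsInternal S := by
    have hfun : ⇑(DirectSum.coeLinearMap S) = ⇑(LinearEquiv.ofBijective Φ hΦbij).symm := by
      funext w
      have hw : w = Φ ((LinearEquiv.ofBijective Φ hΦbij).symm w) :=
        ((LinearEquiv.ofBijective Φ hΦbij).apply_symm_apply w).symm
      calc DirectSum.coeLinearMap S w
          = DirectSum.coeLinearMap S (Φ ((LinearEquiv.ofBijective Φ hΦbij).symm w)) := by
            rw [← hw]
        _ = (LinearEquiv.ofBijective Φ hΦbij).symm w := h1 _
    show Function.Bijective ⇑(DirectSum.coeLinearMap S)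
    rw [hfun]
    exact (LinearEquiv.ofBijective Φ hΦbij).symm.bijective
  -- commutation
  have hcomm : ∀ p q : ι × κ, ∀ x ∈ S p, ∀ y ∈ S q,
      x * y = (D.eps p.1 q.1 * E.eps p.2 q.2) • (y * x) := by
    rintro ⟨i, k⟩ ⟨j, l⟩ x hx y hy
    rw [hspan (i, k)] at hx
    rw [hspan (j, l)] at hy
    induction hx using Submodule.span_induction with
    | mem u hu =>
      obtain ⟨a, ha, b, hb, rfl⟩ := hu
      induction hy using Submodule.span_induction with
      | mem v hv =>
        obtain ⟨a', ha', b', hb', rfl⟩ := hv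
        rw [Algebra.TensorProduct.tmul_mul_tmul, Algebra.TensorProduct.tmul_mul_tmul,
          D.comm i j a ha a' ha', E.comm k l b hb b' hb']
        simp only [TensorProduct.smul_tmul', TensorProduct.tmul_smul, smul_smul]
        rw [mul_comm (E.eps k l) (D.eps i j)]
      | zero => simp
      | add v w hv hw ihv ihw => rw [mul_add, ihv, ihw, add_mul, smul_add]
      | smul c v hv ihv =>
        rw [mul_smul_comm, ihv, smul_mul_assoc, smul_comm]
    | zero => simp
    | add u v hu hv ihu ihv => rw [add_mul, ihu, ihv, mul_add, smul_add]
    | smul c u hu ihu => rw [smul_mul_assoc, ihu, mul_smul_comm, smul_comm]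
  refine ⟨⟨S, hinternal, fun p q => D.eps p.1 q.1 * E.eps p.2 q.2,
    fun p q => mul_ne_zero (D.eps_ne_zero p.1 q.1) (E.eps_ne_zero p.2 q.2),
    hcomm, ?_⟩, fun i k => rfl, fun i j k l => rfl⟩
  intro n idx
  obtain ⟨x, hx, hxne⟩ := D.prod_ne_zero (fun m => (idx m).1)
  obtain ⟨y, hy, hyne⟩ := E.prod_ne_zero (fun m => (idx m).2)
  refine ⟨fun m => x m ⊗ₜ[F] y m, fun m => mem_S (idx m).1 (idx m).2 (x m) (y m) (hx m) (hy m), ?_⟩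
  rw [RegularDecompAux.ofFn_prod_tmul]
  exact RegularDecompAux.tmul_ne_zero hxne hyne
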